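/- (Coherent beats incoherent for many intervals.) For reals γ > 0 and T > 0, define F(γ, T) = 1 − γ² − √(1 − e^{−2γT}) + γ²/√(1 − e^{−2γT}). Then there exists a natural number K ≥ 1 such that for every natural number k ≥ K, k · F(γ, T) ≥ F(γ, T/k). -/
import Mathlib


/-- The classical Fisher information
`F(γ,T) = 1 − γ² − √(1 − e^{−2γT}) + γ²/√(1 − e^{−2γT})` for estimating the
duration `T` on a clock qubit with dephasing rate `γ`. -/
noncomputable def Floc (γ T : ℝ) : ℝ :=
  1 - γ^2 - Real.sqrt (1 - Real.exp (-2*γ*T))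
    + γ^2 / Real.sqrt (1 - Real.exp (-2*γ*T))

set_option maxHeartbeats 1000000 in
/-- Coherent beats incoherent for many intervals: there is a
`K ≥ 1` such that for every `k ≥ K`, `k·F(γ,T) ≥ F(γ,T/k)`. -/
theorem stmt_13 (γ T : ℝ) (hγ : 0 < γ) (hT : 0 < T) :
    ∃ K : ℕ, 1 ≤ K ∧ ∀ k : ℕ, K ≤ k →
      Floc γ (T / k) ≤ (k : ℝ) * Floc γ T := by
  set c := Floc γ T with hc_def
  -- basic facts about s0
  have he1 : Real.exp (-2*γ*T) < 1 := by
    rw [Real.exp_lt_one_iff]; nlinarith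
  have he0 : (0:ℝ) < Real.exp (-2*γ*T) := Real.exp_pos _
  set s0 := Real.sqrt (1 - Real.exp (-2*γ*T)) with hs0_def
  have hs0 : 0 < s0 := Real.sqrt_pos.mpr (by linarith)
  have hs0' : s0 < 1 := by
    have : s0 < Real.sqrt 1 := Real.sqrt_lt_sqrt (by linarith) (by linarith)
    simpa using this
  have hc : 0 < c := by
    have hdiv : γ^2 ≤ γ^2 / s0 := by
      rw [le_div_iff₀ hs0]; nlinarith
    have : c = 1 - γ^2 - s0 + γ^2 / s0 := rfl
    linarith
  set a := γ^2 / Real.sqrt (γ*T) with ha_def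
  have hgT : (0:ℝ) < γ * T := by positivity
  have hsgT : 0 < Real.sqrt (γ*T) := Real.sqrt_pos.mpr hgT
  have ha : 0 ≤ a := by positivity
  refine ⟨max (⌈2*γ*T⌉₊ + 1) (max (⌈2/c⌉₊ + 1) (⌈(2*a/c)^2⌉₊ + 1)),
    le_trans (Nat.succ_le_succ (Nat.zero_le _)) (le_max_left _ _), fun k hk => ?_⟩
  have hk1 : 2*γ*T ≤ (k:ℝ) := by
    have h1 : ⌈2*γ*T⌉₊ ≤ k := by omega
    calc 2*γ*T ≤ (⌈2*γ*T⌉₊ : ℝ) := Nat.le_ceil _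
      _ ≤ k := Nat.cast_le.mpr h1
  have hk2 : 2/c ≤ (k:ℝ) := by
    have h1 : ⌈2/c⌉₊ ≤ k := by omega
    calc 2/c ≤ (⌈2/c⌉₊ : ℝ) := Nat.le_ceil _
      _ ≤ k := Nat.cast_le.mpr h1
  have hk3 : (2*a/c)^2 ≤ (k:ℝ) := by
    have h1 : ⌈(2*a/c)^2⌉₊ ≤ k := by omega
    calc (2*a/c)^2 ≤ ((⌈(2*a/c)^2⌉₊ : ℕ) : ℝ) := Nat.le_ceil _
      _ ≤ k := Nat.cast_le.mpr h1
  have hkpos : (0:ℝ) < k := by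
    have : 1 ≤ k := by omega
    exact_mod_cast Nat.lt_of_lt_of_le Nat.zero_lt_one this
  -- the small-time quantities
  set x := 2*γ*(T/(k:ℝ)) with hx_def
  have hx0 : 0 < x := by positivity
  have hx1 : x ≤ 1 := by
    have h : x = (2*γ*T)/(k:ℝ) := by rw [hx_def]; ring
    rw [h, div_le_one hkpos]; linarith
  -- 1 - exp(-x) ≥ x/2
  have hexp : Real.exp (-x) ≤ 1/(1+x) := by
    have h1 : 1 + x ≤ Real.exp x := by
      have := Real.add_one_le_exp x; linarith
    rw [Real.exp_neg, inv_eq_one_div]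
    exact one_div_le_one_div_of_le (by linarith) h1
  have hlow : x/2 ≤ 1 - Real.exp (-x) := by
    have h2 : 1/(1+x) ≤ 1 - x/2 := by
      rw [div_le_iff₀ (by linarith : (0:ℝ) < 1+x)]
      nlinarith
    linarith
  set s := Real.sqrt (1 - Real.exp (-x)) with hs_def
  have hs : 0 < s := Real.sqrt_pos.mpr (by linarith)
  -- s ≥ sqrt(γT)/sqrt(k)
  have hs_low : Real.sqrt (γ*T) / Real.sqrt (k:ℝ) ≤ s := by
    have h1 : γ*T/(k:ℝ) ≤ 1 - Real.exp (-x) := by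
      rw [hx_def] at hlow
      calc γ*T/(k:ℝ) = 2*γ*(T/(k:ℝ))/2 := by ring
        _ ≤ 1 - Real.exp (-(2*γ*(T/(k:ℝ)))) := hlow
    calc Real.sqrt (γ*T) / Real.sqrt (k:ℝ)
        = Real.sqrt (γ*T/(k:ℝ)) := (Real.sqrt_div hgT.le _).symm
      _ ≤ s := Real.sqrt_le_sqrt h1
  -- the main bound
  have hFle : Floc γ (T/(k:ℝ)) ≤ 1 + γ^2 / s := by
    have : Floc γ (T/(k:ℝ)) = 1 - γ^2 - s + γ^2 / s := by
      rw [Floc, hs_def, hx_def]; ring_nf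
    rw [this]
    nlinarith [sq_nonneg γ, hs.le]
  have hsk : 0 < Real.sqrt (k:ℝ) := Real.sqrt_pos.mpr hkpos
  have hdivle : γ^2 / s ≤ a * Real.sqrt (k:ℝ) := by
    have h1 : γ^2 / s ≤ γ^2 / (Real.sqrt (γ*T) / Real.sqrt (k:ℝ)) := by
      apply div_le_div_of_nonneg_left (sq_nonneg γ) (by positivity) hs_low
    calc γ^2 / s ≤ γ^2 / (Real.sqrt (γ*T) / Real.sqrt (k:ℝ)) := h1
      _ = a * Real.sqrt (k:ℝ) := by rw [ha_def]; field_simp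
  -- numeric combination
  have hsk2 : Real.sqrt (k:ℝ) * Real.sqrt (k:ℝ) = (k:ℝ) :=
    Real.mul_self_sqrt hkpos.le
  have h2ac : 2*a/c ≤ Real.sqrt (k:ℝ) := by
    have := Real.sqrt_le_sqrt hk3
    rwa [Real.sqrt_sq (by positivity)] at this
  have hfin1 : a * Real.sqrt (k:ℝ) ≤ (k:ℝ) * c / 2 := by
    have h3 : a ≤ c * Real.sqrt (k:ℝ) / 2 := by
      rw [div_le_iff₀ hc] at h2ac
      nlinarith
    calc a * Real.sqrt (k:ℝ) ≤ (c * Real.sqrt (k:ℝ) / 2) * Real.sqrt (k:ℝ) :=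
          mul_le_mul_of_nonneg_right h3 hsk.le
      _ = c * (Real.sqrt (k:ℝ) * Real.sqrt (k:ℝ)) / 2 := by ring
      _ = (k:ℝ) * c / 2 := by rw [hsk2]; ring
  have hfin2 : (1:ℝ) ≤ (k:ℝ) * c / 2 := by
    rw [div_le_iff₀ hc] at hk2
    linarith
  clear_value x s s0 c a
  linarith
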